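/- arXiv:1906.02141 — 6 statements merged into one kernel-verified Lean document; each statement's English description precedes it below -/
import Mathlib

section
/- If s and c are holomorphic on a connected open neighbourhood of 0, satisfy s' = c^5, c' = -s^5 with s(0)=0, c(0)=1, and γ = e^{iπ/3}, then whenever z and γz both lie in the domain, s(γz) = γ·s(z) and c(γz) = c(z). -/
open Complex

theorem stmt_1 (r : ℝ) (hr : 0 < r) (s c : ℂ → ℂ)
    (hs : ∀ z ∈ Metric.ball (0 : ℂ) r, HasDerivAt s (c z ^ 5) z)
    (hc : ∀ z ∈ Metric.ball (0 : ℂ) r, HasDerivAt c (-(s z ^ 5)) z)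
    (hs0 : s 0 = 0) (hc0 : c 0 = 1)
    (huniq : ∀ S C : ℂ → ℂ,
      (∀ z ∈ Metric.ball (0 : ℂ) r, HasDerivAt S (C z ^ 5) z) →
      (∀ z ∈ Metric.ball (0 : ℂ) r, HasDerivAt C (-(S z ^ 5)) z) →
      S 0 = 0 → C 0 = 1 →
      ∀ z ∈ Metric.ball (0 : ℂ) r, S z = s z ∧ C z = c z) :
    ∀ z : ℂ, z ∈ Metric.ball (0 : ℂ) r →
      Complex.exp (Real.pi * Complex.I / 3) * z ∈ Metric.ball (0 : ℂ) r →
      s (Complex.exp (Real.pi * Complex.I / 3) * z)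
          = Complex.exp (Real.pi * Complex.I / 3) * s z ∧
      c (Complex.exp (Real.pi * Complex.I / 3) * z) = c z := by
  set γ : ℂ := Complex.exp (Real.pi * Complex.I / 3) with hγdef
  have hγ0 : γ ≠ 0 := Complex.exp_ne_zero _
  have hγ6 : γ ^ 6 = 1 := by
    rw [hγdef, ← Complex.exp_nat_mul,
      show (6 : ℕ) * ((Real.pi : ℂ) * Complex.I / 3) = 2 * Real.pi * Complex.I by
        push_cast; ring]
    exact Complex.exp_two_pi_mul_I
  have habs : ‖γ‖ = 1 := by
    rw [hγdef, Complex.norm_exp]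
    have : ((Real.pi : ℂ) * Complex.I / 3).re = 0 := by simp
    rw [this, Real.exp_zero]
  have hmem : ∀ z : ℂ, z ∈ Metric.ball (0 : ℂ) r → γ * z ∈ Metric.ball (0 : ℂ) r := by
    intro z hz
    simp only [Metric.mem_ball, dist_zero_right, norm_mul] at hz ⊢
    rwa [show ‖γ‖ = 1 from habs, one_mul]
  set S : ℂ → ℂ := fun z => γ⁻¹ * s (γ * z) with hSdef
  set C : ℂ → ℂ := fun z => c (γ * z) with hCdef
  have hlin : ∀ z : ℂ, HasDerivAt (fun w => γ * w) γ z := by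
    intro z
    simpa using (hasDerivAt_id z).const_mul γ
  have hS : ∀ z ∈ Metric.ball (0 : ℂ) r, HasDerivAt S (C z ^ 5) z := by
    intro z hz
    have h1 : HasDerivAt (fun w => s (γ * w)) (c (γ * z) ^ 5 * γ) z :=
      (hs _ (hmem z hz)).comp z (hlin z)
    have h2 := h1.const_mul γ⁻¹
    have : γ⁻¹ * (c (γ * z) ^ 5 * γ) = C z ^ 5 := by
      field_simp [hCdef]
      rfl
    rwa [this] at h2
  have hC : ∀ z ∈ Metric.ball (0 : ℂ) r, HasDerivAt C (-(S z ^ 5)) z := by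
    intro z hz
    have h1 : HasDerivAt C (-(s (γ * z) ^ 5) * γ) z :=
      (hc _ (hmem z hz)).comp z (hlin z)
    have heq : -(s (γ * z) ^ 5) * γ = -(S z ^ 5) := by
      simp only [hSdef]
      have h5 : γ ^ 5 * γ = 1 := by
        have : γ ^ 6 = γ ^ 5 * γ := by ring
        rw [← this, hγ6]
      field_simp
      linear_combination -(s (γ * z) ^ 5) * h5
    rwa [heq] at h1
  have hS0 : S 0 = 0 := by simp [hSdef, hs0]
  have hC0 : C 0 = 1 := by simp [hCdef, hc0]
  intro z hz _
  obtain ⟨h1, h2⟩ := huniq S C hS hC hS0 hC0 z hz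
  constructor
  · have h1' : γ⁻¹ * s (γ * z) = s z := h1
    field_simp at h1'
    linear_combination h1'
  · exact h2
end

section
/- If s and c are holomorphic on a disc B centred at 0 on which the IVP s'=c^5, c'=-s^5, s(0)=0, c(0)=1 has a unique solution, then s(conj z) = conj(s(z)) and c(conj z) = conj(c(z)) for all z in B (assuming B is symmetric under conjugation). -/
open Complex

lemma hasDerivAt_conj_conj {f : ℂ → ℂ} {f' z : ℂ}
    (h : HasDerivAt f f' ((starRingEnd ℂ) z)) :
    HasDerivAt (fun w => (starRingEnd ℂ) (f ((starRingEnd ℂ) w))) ((starRingEnd ℂ) f') z := by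
  rw [hasDerivAt_iff_isLittleO_nhds_zero] at h ⊢
  have hconj : Filter.Tendsto (starRingEnd ℂ) (nhds (0 : ℂ)) (nhds 0) := by
    simpa using (continuous_conj.tendsto (0 : ℂ))
  have h2 := h.comp_tendsto hconj
  rw [Asymptotics.isLittleO_iff] at h2 ⊢
  intro ε hε
  filter_upwards [h2 hε] with x hx
  simp only [Function.comp, smul_eq_mul] at hx ⊢
  have : (starRingEnd ℂ) (f ((starRingEnd ℂ) (z + x))) - (starRingEnd ℂ) (f ((starRingEnd ℂ) z))
      - x * (starRingEnd ℂ) f'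
      = (starRingEnd ℂ) (f ((starRingEnd ℂ) z + (starRingEnd ℂ) x) - f ((starRingEnd ℂ) z)
        - (starRingEnd ℂ) x * f') := by
    simp [map_sub, map_mul, map_add]
  rw [this, RCLike.norm_conj]
  simpa using hx

theorem stmt_2 (r : ℝ) (hr : 0 < r) (s c : ℂ → ℂ)
    (hs : ∀ z ∈ Metric.ball (0 : ℂ) r, HasDerivAt s (c z ^ 5) z)
    (hc : ∀ z ∈ Metric.ball (0 : ℂ) r, HasDerivAt c (-(s z ^ 5)) z)
    (hs0 : s 0 = 0) (hc0 : c 0 = 1)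
    (huniq : ∀ S C : ℂ → ℂ,
      (∀ z ∈ Metric.ball (0 : ℂ) r, HasDerivAt S (C z ^ 5) z) →
      (∀ z ∈ Metric.ball (0 : ℂ) r, HasDerivAt C (-(S z ^ 5)) z) →
      S 0 = 0 → C 0 = 1 →
      ∀ z ∈ Metric.ball (0 : ℂ) r, S z = s z ∧ C z = c z) :
    ∀ z ∈ Metric.ball (0 : ℂ) r,
      s (starRingEnd ℂ z) = starRingEnd ℂ (s z) ∧
      c (starRingEnd ℂ z) = starRingEnd ℂ (c z) := by
  set S : ℂ → ℂ := fun w => (starRingEnd ℂ) (s ((starRingEnd ℂ) w)) with hS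
  set C : ℂ → ℂ := fun w => (starRingEnd ℂ) (c ((starRingEnd ℂ) w)) with hC
  have hmem : ∀ z ∈ Metric.ball (0 : ℂ) r, (starRingEnd ℂ) z ∈ Metric.ball (0 : ℂ) r := by
    intro z hz
    simpa [Metric.mem_ball] using hz
  have hS' : ∀ z ∈ Metric.ball (0 : ℂ) r, HasDerivAt S (C z ^ 5) z := by
    intro z hz
    have := hasDerivAt_conj_conj (hs _ (hmem z hz))
    simpa [hC, map_pow] using this
  have hC' : ∀ z ∈ Metric.ball (0 : ℂ) r, HasDerivAt C (-(S z ^ 5)) z := by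
    intro z hz
    have := hasDerivAt_conj_conj (hc _ (hmem z hz))
    simpa [hS, map_pow, map_neg] using this
  have hS0 : S 0 = 0 := by simp [hS, hs0]
  have hC0 : C 0 = 1 := by simp [hC, hc0]
  intro z hz
  obtain ⟨h1, h2⟩ := huniq S C hS' hC' hS0 hC0 z hz
  constructor
  · have := congrArg (starRingEnd ℂ) h1
    simpa [hS] using this.symm |>.symm
  · have := congrArg (starRingEnd ℂ) h2
    simpa [hC] using this.symm |>.symm
end

section
/- If s and c solve s'=c^5, c'=-s^5, s(0)=0, c(0)=1 on a connected open neighbourhood of 0, then q = s^2·c^2 satisfies the differential equation (q')^2 = 4·q·(1 - 4·q^3). -/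
open Complex

theorem stmt_5 (U : Set ℂ) (hU : IsOpen U) (hconn : IsPreconnected U)
    (h0 : (0 : ℂ) ∈ U) (s c : ℂ → ℂ)
    (hs : ∀ z ∈ U, HasDerivAt s (c z ^ 5) z)
    (hc : ∀ z ∈ U, HasDerivAt c (-(s z ^ 5)) z)
    (hs0 : s 0 = 0) (hc0 : c 0 = 1)
    (q : ℂ → ℂ) (hq : q = fun z => s z ^ 2 * c z ^ 2) :
    ∀ z ∈ U, (deriv q z) ^ 2 = 4 * q z * (1 - 4 * q z ^ 3) := by
  set f : ℂ → ℂ := fun z => s z ^ 6 + c z ^ 6 with hf_def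
  have hf : ∀ z ∈ U, HasDerivAt f 0 z := by
    intro z hz
    have h1 := ((hs z hz).pow 6).add ((hc z hz).pow 6)
    refine h1.congr_deriv ?_
    ring
  -- f is constant 1 on a ball around 0
  obtain ⟨r, hrpos, hrsub⟩ := Metric.isOpen_iff.1 hU 0 h0
  have hfd0 : ∀ z ∈ Metric.ball (0 : ℂ) r, fderivWithin ℂ f (Metric.ball (0:ℂ) r) z = 0 := by
    intro z hz
    rw [fderivWithin_of_isOpen Metric.isOpen_ball hz]
    have := (hf z (hrsub hz)).hasFDerivAt.fderiv
    rw [this]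
    ext
    simp
  have hball : ∀ z ∈ Metric.ball (0 : ℂ) r, f z = 1 := by
    intro z hz
    have := (convex_ball (0:ℂ) r).is_const_of_fderivWithin_eq_zero
      (fun w hw => ((hf w (hrsub hw)).differentiableAt.differentiableWithinAt))
      hfd0 hz (Metric.mem_ball_self hrpos)
    rw [this]
    simp [hf_def, hs0, hc0]
  have hana : AnalyticOnNhd ℂ f U :=
    (analyticOnNhd_iff_differentiableOn hU).2
      (fun z hz => (hf z hz).differentiableAt.differentiableWithinAt)
  have hkey : Set.EqOn f (fun _ => 1) U := by
    apply hana.eqOn_of_preconnected_of_eventuallyEq analyticOnNhd_const hconn h0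
    filter_upwards [Metric.ball_mem_nhds (0:ℂ) hrpos] with z hz using hball z hz
  intro z hz
  have h1 : s z ^ 6 + c z ^ 6 = 1 := hkey hz
  have hqd : HasDerivAt q (2 * s z ^ 1 * c z ^ 5 * c z ^ 2 +
      s z ^ 2 * (2 * c z ^ 1 * -(s z ^ 5))) z := by
    rw [hq]
    exact ((hs z hz).pow 2).mul ((hc z hz).pow 2)
  rw [hqd.deriv, hq]
  simp only
  linear_combination (4 * s z ^ 2 * c z ^ 2 * (s z ^ 6 + c z ^ 6 + 1)) * h1
end

section
/- Suppose s and c are meromorphic functions on a connected open set extending the solution of s'=c^5, c'=-s^5, s(0)=0, c(0)=1, and suppose z₀ is a pole of s of order m and of c of order n. Then m + 1 = 5n and n + 1 = 5m, which forces m = n = 1/4, a contradiction; hence s and c cannot have poles, i.e., any meromorphic extension of s or c is holomorphic. -/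
open Complex Filter

private lemma key_pow_eq {z₀ : ℂ} {f g : ℂ → ℂ} {p q : ℕ}
    (hf : ContinuousAt f z₀) (hg : ContinuousAt g z₀)
    (hf0 : f z₀ ≠ 0) (hg0 : g z₀ ≠ 0)
    (h : ∀ᶠ z in nhdsWithin z₀ {z₀}ᶜ, f z * (z - z₀) ^ p = g z * (z - z₀) ^ q) :
    p = q := by
  by_contra hne
  wlog hlt : p < q generalizing f g p q
  · exact this hg hf hg0 hf0 (h.mono fun z hz => hz.symm) (Ne.symm hne) (by omega)
  have h2 : ∀ᶠ z in nhdsWithin z₀ {z₀}ᶜ, f z = g z * (z - z₀) ^ (q - p) := by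
    filter_upwards [h, self_mem_nhdsWithin] with z hz hz'
    have hz0 : (z - z₀) ^ p ≠ 0 := pow_ne_zero _ (sub_ne_zero.2 hz')
    have heq : f z * (z - z₀) ^ p = g z * (z - z₀) ^ (q - p) * (z - z₀) ^ p := by
      rw [hz, mul_assoc, ← pow_add]
      congr 2
      omega
    exact mul_right_cancel₀ hz0 heq
  have l1 : Tendsto f (nhdsWithin z₀ {z₀}ᶜ) (nhds (f z₀)) :=
    hf.tendsto.mono_left nhdsWithin_le_nhds
  have l2 : Tendsto (fun z => g z * (z - z₀) ^ (q - p)) (nhdsWithin z₀ {z₀}ᶜ) (nhds 0) := by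
    have hcont : ContinuousAt (fun z => g z * (z - z₀) ^ (q - p)) z₀ :=
      hg.mul (((continuous_id.sub continuous_const).pow _).continuousAt)
    have hval : g z₀ * (z₀ - z₀) ^ (q - p) = 0 := by
      simp [sub_self, zero_pow (by omega : q - p ≠ 0)]
    have := hcont.tendsto.mono_left (nhdsWithin_le_nhds : nhdsWithin z₀ {z₀}ᶜ ≤ nhds z₀)
    simpa [sub_self, zero_pow (show q - p ≠ 0 by omega)] using this
  have : f z₀ = 0 := tendsto_nhds_unique (l1.congr' h2) l2
  exact hf0 this

private lemma side_lemma {z₀ ε : ℂ} {s c a b : ℂ → ℂ} {m n : ℕ}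
    (hε : ε ≠ 0)
    (ha : AnalyticAt ℂ a z₀) (hb : AnalyticAt ℂ b z₀)
    (ha0 : a z₀ ≠ 0) (hb0 : b z₀ ≠ 0)
    (hm : 0 < m)
    (hs : ∀ᶠ z in nhdsWithin z₀ {z₀}ᶜ, HasDerivAt s (ε * c z ^ 5) z)
    (hsa : ∀ᶠ z in nhdsWithin z₀ {z₀}ᶜ, s z = a z / (z - z₀) ^ m)
    (hcb : ∀ᶠ z in nhdsWithin z₀ {z₀}ᶜ, c z = b z / (z - z₀) ^ n) :
    5 * n = m + 1 := by
  obtain ⟨k, rfl⟩ : ∃ k, m = k + 1 := ⟨m - 1, by omega⟩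
  set f : ℂ → ℂ := fun z => deriv a z * (z - z₀) - ((k : ℂ) + 1) * a z with hfdef
  have hderivA : AnalyticAt ℂ (deriv a) z₀ := by
    have h1 : AnalyticAt ℂ (fderiv ℂ a) z₀ := ha.fderiv
    have h2 := ((ContinuousLinearMap.apply ℂ ℂ (1 : ℂ)).analyticAt
      (fderiv ℂ a z₀)).comp h1
    exact h2
  have hfc : ContinuousAt f z₀ :=
    ((hderivA.continuousAt.mul (continuousAt_id.sub continuousAt_const)).sub
      (continuousAt_const.mul ha.continuousAt))
  have hf0 : f z₀ ≠ 0 := by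
    have : f z₀ = -(((k : ℂ) + 1) * a z₀) := by simp [hfdef]
    rw [this]
    refine neg_ne_zero.2 (mul_ne_zero ?_ ha0)
    have : ((k : ℂ) + 1) ≠ 0 := by exact_mod_cast (Nat.cast_ne_zero (R := ℂ)).2 (Nat.succ_ne_zero k)
    simpa using this
  have hgc : ContinuousAt (fun z => ε * b z ^ 5) z₀ :=
    continuousAt_const.mul (hb.continuousAt.pow 5)
  have hg0 : ε * b z₀ ^ 5 ≠ 0 := mul_ne_zero hε (pow_ne_zero _ hb0)
  -- rewrite hsa as a product identity
  have hsa' : ∀ᶠ z in nhds z₀, z ≠ z₀ → s z * (z - z₀) ^ (k + 1) = a z := by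
    have := eventually_nhdsWithin_iff.mp hsa
    filter_upwards [this] with z hz hz'
    have h1 : (z - z₀) ^ (k + 1) ≠ 0 := pow_ne_zero _ (sub_ne_zero.2 hz')
    rw [hz hz', div_mul_cancel₀ _ h1]
  have hsaE := hsa'.eventually_nhds
  have E : ∀ᶠ z in nhdsWithin z₀ {z₀}ᶜ,
      f z * (z - z₀) ^ (5 * n) = (ε * b z ^ 5) * (z - z₀) ^ (k + 1 + 1) := by
    filter_upwards [hs, hcb, hsaE.filter_mono nhdsWithin_le_nhds, self_mem_nhdsWithin]
      with z hdz hcz hEz hzne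
    have hz0 : z - z₀ ≠ 0 := sub_ne_zero.2 hzne
    have hpow : HasDerivAt (fun w : ℂ => (w - z₀) ^ (k + 1))
        (((k : ℂ) + 1) * (z - z₀) ^ k * 1) z := by
      have := ((hasDerivAt_id z).sub_const z₀).fun_pow (k + 1)
      simpa using this
    have hprod : HasDerivAt (fun w => s w * (w - z₀) ^ (k + 1))
        (ε * c z ^ 5 * (z - z₀) ^ (k + 1) + s z * (((k : ℂ) + 1) * (z - z₀) ^ k * 1)) z :=
      hdz.mul hpow
    have hEq : (fun w => s w * (w - z₀) ^ (k + 1)) =ᶠ[nhds z] a := by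
      filter_upwards [hEz, isOpen_compl_singleton.mem_nhds hzne] with w hw hw'
      exact hw hw'
    have hda : HasDerivAt a
        (ε * c z ^ 5 * (z - z₀) ^ (k + 1) + s z * (((k : ℂ) + 1) * (z - z₀) ^ k * 1)) z :=
      hprod.congr_of_eventuallyEq hEq.symm
    have hderiv : deriv a z
        = ε * c z ^ 5 * (z - z₀) ^ (k + 1) + s z * (((k : ℂ) + 1) * (z - z₀) ^ k * 1) :=
      hda.deriv
    have hsz : s z * (z - z₀) ^ (k + 1) = a z := hEq.self_of_nhds
    simp only [hfdef]
    rw [hderiv, hcz, ← hsz]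
    field_simp
    ring
  have := key_pow_eq hfc hgc hf0 hg0 E
  omega

theorem stmt_7 (U : Set ℂ) (hU : IsOpen U) (hconn : IsPreconnected U)
    (h0 : (0 : ℂ) ∈ U) (s c : ℂ → ℂ)
    (hs0 : s 0 = 0) (hc0 : c 0 = 1)
    (z₀ : ℂ) (hz₀ : z₀ ∈ U)
    (hs : ∀ᶠ z in nhdsWithin z₀ {z₀}ᶜ, HasDerivAt s (c z ^ 5) z)
    (hc : ∀ᶠ z in nhdsWithin z₀ {z₀}ᶜ, HasDerivAt c (-(s z ^ 5)) z)
    (m n : ℕ) (hm : 0 < m) (hn : 0 < n)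
    (a b : ℂ → ℂ) (ha : AnalyticAt ℂ a z₀) (hb : AnalyticAt ℂ b z₀)
    (ha0 : a z₀ ≠ 0) (hb0 : b z₀ ≠ 0)
    (hsa : ∀ᶠ z in nhdsWithin z₀ {z₀}ᶜ, s z = a z / (z - z₀) ^ m)
    (hcb : ∀ᶠ z in nhdsWithin z₀ {z₀}ᶜ, c z = b z / (z - z₀) ^ n) :
    False := by
  have hs' : ∀ᶠ z in nhdsWithin z₀ {z₀}ᶜ, HasDerivAt s ((1 : ℂ) * c z ^ 5) z := by
    filter_upwards [hs] with z hz; simpa using hz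
  have hc' : ∀ᶠ z in nhdsWithin z₀ {z₀}ᶜ, HasDerivAt c ((-1 : ℂ) * s z ^ 5) z := by
    filter_upwards [hc] with z hz; simpa [neg_one_mul] using hz
  have h1 : 5 * n = m + 1 := side_lemma one_ne_zero ha hb ha0 hb0 hm hs' hsa hcb
  have h2 : 5 * m = n + 1 := side_lemma (neg_ne_zero.2 one_ne_zero) hb ha hb0 ha0 hn hc' hcb hsa
  omega
end

section
/- If s and c solve the IVP s'=c^5, c'=-s^5, s(0)=0, c(0)=1 near 0, and ℘ is meromorphic on ℂ with (℘')^2 = 4℘^3 - 16 extending 1/(s^2c^2), then S = s^{12} satisfies (S + ℘^{-3})^2 = S near 0; equivalently S^2 + (2℘^{-3} - 1)S + ℘^{-6} = 0. -/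
open Complex Filter Topology

theorem stmt_8 (U : Set ℂ) (hU : IsOpen U) (h0 : (0 : ℂ) ∈ U) (s c : ℂ → ℂ)
    (hs : ∀ z ∈ U, HasDerivAt s (c z ^ 5) z)
    (hc : ∀ z ∈ U, HasDerivAt c (-(s z ^ 5)) z)
    (hs0 : s 0 = 0) (hc0 : c 0 = 1)
    (P : ℂ → ℂ)
    (hPde : ∀ z ∈ U \ {0}, (deriv P z) ^ 2 = 4 * P z ^ 3 - 16)
    (hPq : ∀ z ∈ U \ {0}, P z = 1 / (s z ^ 2 * c z ^ 2)) :
    ∀ z ∈ U \ {0},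
      (s z ^ 12 + (P z)⁻¹ ^ 3) ^ 2 = s z ^ 12 ∧
      (s z ^ 12) ^ 2 + (2 * (P z)⁻¹ ^ 3 - 1) * s z ^ 12 + (P z)⁻¹ ^ 6 = 0 := by
  intro z hz
  obtain ⟨hzU, hz0⟩ := hz
  have hopen : IsOpen (U \ {0}) := hU.sdiff isClosed_singleton
  have hmem : U \ {0} ∈ 𝓝 z := hopen.mem_nhds ⟨hzU, hz0⟩
  have hPq' : P =ᶠ[𝓝 z] fun w => 1 / (s w ^ 2 * c w ^ 2) :=
    eventually_of_mem hmem (fun w hw => hPq w hw)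
  have hPz := hPq z ⟨hzU, hz0⟩
  by_cases hsz : s z = 0
  · -- s z = 0 : P z = 0 and everything vanishes
    have hP : P z = 0 := by rw [hPz, hsz]; simp
    rw [hsz, hP]; norm_num
  by_cases hcz : c z = 0
  · -- c z = 0, s z ≠ 0 : contradiction with the ODE for P
    exfalso
    have hd : deriv P z ^ 2 = -16 := by
      have h1 := hPde z ⟨hzU, hz0⟩
      rw [hPz, hcz] at h1; simpa using h1
    have hdiff : DifferentiableAt ℂ P z := by
      by_contra h
      rw [deriv_zero_of_not_differentiableAt h] at hd
      norm_num at hd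
    have hcont : Tendsto P (𝓝[≠] z) (𝓝 (P z)) :=
      hdiff.continuousAt.continuousWithinAt.tendsto
    -- but ‖P‖ → ∞ near z
    have hcd : HasDerivAt c (-(s z ^ 5)) z := hc z hzU
    have hne : ∀ᶠ w in 𝓝[≠] z, c w ≠ c z :=
      hcd.eventually_ne (by simpa using pow_ne_zero 5 hsz)
    have hne' : ∀ᶠ w in 𝓝[≠] z, s w ^ 2 * c w ^ 2 ≠ 0 := by
      have hscont : Tendsto s (𝓝[≠] z) (𝓝 (s z)) :=
        ((hs z hzU).differentiableAt.continuousAt.continuousWithinAt).tendsto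
      have hsne : ∀ᶠ w in 𝓝[≠] z, s w ≠ 0 :=
        hscont.eventually_ne hsz
      filter_upwards [hne, hsne] with w h1 h2
      rw [hcz] at h1
      exact mul_ne_zero (pow_ne_zero _ h2) (pow_ne_zero _ h1)
    have htend0 : Tendsto (fun w => s w ^ 2 * c w ^ 2) (𝓝[≠] z) (𝓝[≠] 0) := by
      apply tendsto_nhdsWithin_of_tendsto_nhds_of_eventually_within
      · have hscont : Tendsto s (𝓝[≠] z) (𝓝 (s z)) :=
          ((hs z hzU).differentiableAt.continuousAt.continuousWithinAt).tendsto
        have hccont : Tendsto c (𝓝[≠] z) (𝓝 (c z)) :=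
          hcd.differentiableAt.continuousAt.continuousWithinAt.tendsto
        have : Tendsto (fun w => s w ^ 2 * c w ^ 2) (𝓝[≠] z) (𝓝 (s z ^ 2 * c z ^ 2)) :=
          (hscont.pow 2).mul (hccont.pow 2)
        simpa [hcz] using this
      · exact hne'
    have hblow : Tendsto (fun w => ‖(s w ^ 2 * c w ^ 2)⁻¹‖) (𝓝[≠] z) atTop :=
      tendsto_norm_inv_nhdsNE_zero_atTop.comp htend0
    have hblow' : Tendsto (fun w => ‖P w‖) (𝓝[≠] z) atTop := by
      apply hblow.congr'
      filter_upwards [hPq'.filter_mono nhdsWithin_le_nhds] with w hw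
      rw [hw, one_div]
    have hfin : Tendsto (fun w => ‖P w‖) (𝓝[≠] z) (𝓝 ‖P z‖) := hcont.norm
    have : (𝓝[≠] z).NeBot := Module.punctured_nhds_neBot ℂ ℂ z
    exact not_tendsto_atTop_of_tendsto_nhds hfin hblow'
  · -- main case : s z ≠ 0, c z ≠ 0
    set a := s z with ha
    set b := c z with hb
    have habne : a ^ 2 * b ^ 2 ≠ 0 :=
      mul_ne_zero (pow_ne_zero _ hsz) (pow_ne_zero _ hcz)
    -- compute deriv P z
    have hq : HasDerivAt (fun w => 1 / (s w ^ 2 * c w ^ 2))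
        (-((2 * a * b ^ 5 * b ^ 2 + a ^ 2 * (2 * b * -(a ^ 5)))) / (a ^ 2 * b ^ 2) ^ 2) z := by
      have hsd : HasDerivAt s (b ^ 5) z := hs z hzU
      have hcd : HasDerivAt c (-(a ^ 5)) z := hc z hzU
      have h1 : HasDerivAt (fun w => s w ^ 2 * c w ^ 2)
          (2 * a * b ^ 5 * b ^ 2 + a ^ 2 * (2 * b * -(a ^ 5))) z := by
        have := ((hsd.pow 2).mul (hcd.pow 2))
        refine this.congr_deriv ?_
        simp only [Pi.pow_apply, ← ha, ← hb, Nat.reduceSub, pow_one]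
        push_cast
        ring
      simpa [one_div, ha, hb, Pi.inv_def] using h1.inv habne
    have hderiv : deriv P z =
        -((2 * a * b ^ 5 * b ^ 2 + a ^ 2 * (2 * b * -(a ^ 5)))) / (a ^ 2 * b ^ 2) ^ 2 := by
      rw [hPq'.deriv_eq]
      exact hq.deriv
    -- the ODE gives (a^6+b^6)^2 = 1
    have hkey : (a ^ 6 + b ^ 6) ^ 2 = 1 := by
      have h1 := hPde z ⟨hzU, hz0⟩
      rw [hderiv, hPz] at h1
      have ha0 : a ≠ 0 := hsz
      have hb0 : b ≠ 0 := hcz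
      field_simp at h1
      have h2 : (4 : ℂ) * a ^ 8 * b ^ 8 * ((a ^ 6 + b ^ 6) ^ 2 - 1) = 0 := by
        linear_combination a ^ 8 * b ^ 8 * h1
      have h3 : (4 : ℂ) * a ^ 8 * b ^ 8 ≠ 0 := by
        simp [pow_ne_zero, ha0, hb0]
      exact sub_eq_zero.mp ((mul_eq_zero.mp h2).resolve_left h3)
    have hinv : (P z)⁻¹ = a ^ 2 * b ^ 2 := by
      rw [hPz, one_div, inv_inv]
    rw [hinv]
    constructor
    · linear_combination (a ^ 12) * hkey
    · linear_combination (a ^ 12) * hkey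
end

section
/- Let t be holomorphic on a connected open set U and satisfy (t')^3 = 1 + t^6 on U. If t' vanishes at some point of U, then t is constant on U. -/
open Complex Filter Topology

theorem stmt_10 (U : Set ℂ) (hU : IsOpen U) (hconn : IsPreconnected U)
    (t : ℂ → ℂ) (ht : DifferentiableOn ℂ t U)
    (heq : ∀ z ∈ U, (deriv t z) ^ 3 = 1 + t z ^ 6)
    (z₀ : ℂ) (hz₀ : z₀ ∈ U) (hv : deriv t z₀ = 0) :
    ∀ z ∈ U, t z = t z₀ := by
  have hta : AnalyticOnNhd ℂ t U := ht.analyticOnNhd hU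
  set c := t z₀ with hc
  have hc6 : c ^ 6 = -1 := by
    have h := heq z₀ hz₀
    rw [hv] at h
    linear_combination -h
  have hc0 : c ≠ 0 := by
    intro h; rw [h] at hc6; norm_num at hc6
  -- the analytic function t - c
  have hf : AnalyticAt ℂ (fun z => t z - c) z₀ := (hta z₀ hz₀).sub analyticAt_const
  -- key local step: t is eventually equal to c near z₀
  have hev : ∀ᶠ z in 𝓝 z₀, t z - c = 0 := by
    by_contra hnot
    have hord : analyticOrderAt (fun z => t z - c) z₀ ≠ ⊤ := by rw [Ne, analyticOrderAt_eq_top]; exact hnot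
    obtain ⟨k, hk⟩ : ∃ k : ℕ, analyticOrderAt (fun z => t z - c) z₀ = (k : ℕ∞) := by
      cases h : analyticOrderAt (fun z => t z - c) z₀ with
      | top => exact absurd h hord
      | coe k => exact ⟨k, rfl⟩
    have hk0 : k ≠ 0 := by
      intro h0
      rw [h0] at hk
      obtain ⟨g, hg, hg0, hfg⟩ := (hf.analyticOrderAt_eq_natCast (n := 0)).mp hk
      have h2 := hfg.self_of_nhds
      simp only [pow_zero, one_smul] at h2
      rw [← hc, sub_self] at h2
      exact hg0 h2.symm
    obtain ⟨m, rfl⟩ : ∃ m, k = m + 1 := ⟨k - 1, (Nat.succ_pred_eq_of_pos (Nat.pos_of_ne_zero hk0)).symm⟩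
    obtain ⟨g, hg, hg0, hfg⟩ := (hf.analyticOrderAt_eq_natCast (n := m + 1)).mp hk
    -- deriv g is analytic at z₀
    obtain ⟨s, hs, hgs⟩ := hg.exists_mem_nhds_analyticOnNhd
    have hg' : AnalyticAt ℂ (deriv g) z₀ := hgs.deriv z₀ (mem_of_mem_nhds hs)
    -- the cube of the derivative, as analytic function
    have hP : AnalyticAt ℂ (fun z => (deriv t z) ^ 3) z₀ := ((hta.deriv z₀ hz₀).pow 3)
    -- First order computation: order = m + 1, via 1 + t^6 = (t - c) * Q(t)
    have horder1 : analyticOrderAt (fun z => (deriv t z) ^ 3) z₀ = ((m + 1 : ℕ) : ℕ∞) := by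
      rw [hP.analyticOrderAt_eq_natCast]
      refine ⟨fun z => g z * (t z ^ 5 + c * t z ^ 4 + c ^ 2 * t z ^ 3 + c ^ 3 * t z ^ 2
        + c ^ 4 * t z + c ^ 5), hg.mul ?_, ?_, ?_⟩
      · have htz : AnalyticAt ℂ t z₀ := hta z₀ hz₀
        exact ((((((htz.pow 5).add (analyticAt_const.mul (htz.pow 4))).add
          (analyticAt_const.mul (htz.pow 3))).add (analyticAt_const.mul (htz.pow 2))).add
          (analyticAt_const.mul htz)).add analyticAt_const)
      · have : t z₀ ^ 5 + c * t z₀ ^ 4 + c ^ 2 * t z₀ ^ 3 + c ^ 3 * t z₀ ^ 2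
            + c ^ 4 * t z₀ + c ^ 5 = 6 * c ^ 5 := by rw [← hc]; ring
        show g z₀ * (t z₀ ^ 5 + c * t z₀ ^ 4 + c ^ 2 * t z₀ ^ 3 + c ^ 3 * t z₀ ^ 2
          + c ^ 4 * t z₀ + c ^ 5) ≠ 0
        rw [this]
        exact mul_ne_zero hg0 (mul_ne_zero (by norm_num) (pow_ne_zero _ hc0))
      · filter_upwards [hfg, hU.mem_nhds hz₀] with z hz1 hz2
        rw [smul_eq_mul] at hz1 ⊢
        rw [heq z hz2]
        linear_combination (t z ^ 5 + c * t z ^ 4 + c ^ 2 * t z ^ 3 + c ^ 3 * t z ^ 2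
          + c ^ 4 * t z + c ^ 5) * hz1 + hc6
    -- Second order computation: order = 3 * m, via differentiating the factorization
    have horder2 : analyticOrderAt (fun z => (deriv t z) ^ 3) z₀ = ((3 * m : ℕ) : ℕ∞) := by
      rw [hP.analyticOrderAt_eq_natCast]
      refine ⟨fun z => ((m + 1 : ℂ) * g z + (z - z₀) * deriv g z) ^ 3,
        ((analyticAt_const.mul hg).add
          (((analyticAt_id.sub analyticAt_const)).mul hg')).pow 3, ?_, ?_⟩
      · simp only [sub_self, zero_mul, add_zero]
        apply pow_ne_zero
        exact mul_ne_zero (Nat.cast_add_one_ne_zero m) hg0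
      · -- compute deriv t eventually
        have hteq : t =ᶠ[𝓝 z₀] fun z => c + (z - z₀) ^ (m + 1) * g z := by
          filter_upwards [hfg] with z hz
          rw [smul_eq_mul] at hz
          linear_combination hz
        have hd : deriv t =ᶠ[𝓝 z₀] deriv (fun z => c + (z - z₀) ^ (m + 1) * g z) :=
          hteq.deriv
        filter_upwards [hd, hg.eventually_analyticAt] with z hz1 hz2
        have hgd : DifferentiableAt ℂ g z := hz2.differentiableAt
        have hder : HasDerivAt (fun z => c + (z - z₀) ^ (m + 1) * g z)
            (((m + 1 : ℕ) * (z - z₀) ^ m * 1) * g z + (z - z₀) ^ (m + 1) * deriv g z) z := by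
          have h1 : HasDerivAt (fun z => (z - z₀) ^ (m + 1))
              ((m + 1 : ℕ) * (z - z₀) ^ m * 1) z := by
            simpa using (((hasDerivAt_id z).sub_const z₀).fun_pow (m + 1))
          exact (h1.mul hgd.hasDerivAt).const_add c
        rw [hz1, hder.deriv, smul_eq_mul]
        push_cast
        ring
    rw [horder1] at horder2
    have : (m + 1 : ℕ) = 3 * m := by exact_mod_cast horder2
    omega
  -- identity theorem
  have hcev : t =ᶠ[𝓝 z₀] fun _ => c := by
    filter_upwards [hev] with z hz
    exact sub_eq_zero.mp hz
  have := hta.eqOn_of_preconnected_of_eventuallyEq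
    (fun z _ => analyticAt_const (v := c)) hconn hz₀ hcev
  intro z hz
  exact this hz
end
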